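/- Let H : [t₀, t₁] → M₂(ℂ) be continuous with values in Hermitian matrices such that ∫_{t₀}^{t₁} ‖H(τ)‖ dτ ≤ ε ≤ 1/4. Let X solve i X'(t) = H(t) X(t), X(t₀) = 𝕀, and set I = ∫_{t₀}^{t₁} H(τ) dτ. Then ‖X(t₁) − exp(-i I)‖ ≤ C ε² for a universal constant C. -/

import Mathlib

open Matrix MeasureTheory
open scoped Matrix.Norms.L2Operator

/-- Second-order remainder bound for the exponential in the 2×2 matrix algebra. -/
lemma magnus_aux_exp_remainder (A : Matrix (Fin 2) (Fin 2) ℂ) (r : ℝ)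
    (h0 : 0 ≤ r) (hA : ‖A‖ ≤ r) (hr : r ≤ 1 / 4) :
    ‖NormedSpace.exp A - 1 - A‖ ≤ 2 * r ^ 2 := by
  have hs : Summable (fun n : ℕ => ((n.factorial : ℂ))⁻¹ • A ^ n) := NormedSpace.expSeries_summable' A
  have hkey : NormedSpace.exp A - 1 - A = ∑' n : ℕ, (((n + 2).factorial : ℂ))⁻¹ • A ^ (n + 2) := by
    have h2 := Summable.sum_add_tsum_nat_add (f := fun n : ℕ => ((n.factorial : ℂ))⁻¹ • A ^ n) 2 hs
    have hexp : NormedSpace.exp A = ∑' n : ℕ, ((n.factorial : ℂ))⁻¹ • A ^ n := by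
      rw [NormedSpace.exp_eq_tsum ℂ]
    rw [hexp, ← h2]
    simp [Finset.sum_range_succ]
    abel
  rw [hkey]
  have hbound : ∀ n : ℕ, ‖(((n + 2).factorial : ℂ))⁻¹ • A ^ (n + 2)‖ ≤ r ^ 2 * r ^ n := by
    intro n
    rw [norm_smul]
    have h1 : ‖(((n + 2).factorial : ℂ))⁻¹‖ ≤ 1 := by
      rw [norm_inv, Complex.norm_natCast]
      rw [inv_le_one_iff₀]
      right
      exact_mod_cast Nat.one_le_iff_ne_zero.mpr (Nat.factorial_ne_zero _)
    have h2 : ‖A ^ (n + 2)‖ ≤ r ^ (n + 2) := by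
      calc ‖A ^ (n + 2)‖ ≤ ‖A‖ ^ (n + 2) := norm_pow_le' A (by omega)
        _ ≤ r ^ (n + 2) := pow_le_pow_left₀ (norm_nonneg _) hA _
    calc ‖(((n + 2).factorial : ℂ))⁻¹‖ * ‖A ^ (n + 2)‖ ≤ 1 * r ^ (n + 2) := by
          exact mul_le_mul h1 h2 (norm_nonneg _) zero_le_one
      _ = r ^ 2 * r ^ n := by ring
  have hgeo : HasSum (fun n : ℕ => r ^ 2 * r ^ n) (r ^ 2 * (1 - r)⁻¹) :=
    (hasSum_geometric_of_lt_one h0 (by linarith)).mul_left _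
  calc ‖∑' n : ℕ, (((n + 2).factorial : ℂ))⁻¹ • A ^ (n + 2)‖ ≤ r ^ 2 * (1 - r)⁻¹ :=
        tsum_of_norm_bounded hgeo hbound
    _ ≤ 2 * r ^ 2 := by
        have h34 : (1 - r)⁻¹ ≤ 2 := by
          rw [inv_le_comm₀ (by linarith) (by norm_num)]
          linarith
        nlinarith [sq_nonneg r]

/-- First-order Magnus expansion error bound: there is a universal constant `C` such that if
`∫ ‖H‖ ≤ ε ≤ 1/4`, `i X' = H(t) X`, `X(t₀) = 𝕀`, and `I = ∫_{t₀}^{t₁} H`, then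
`‖X(t₁) − exp(-i I)‖ ≤ C ε²`. -/
theorem magnus_first_order_error :
    ∃ C : ℝ, 0 < C ∧
      ∀ (t₀ t₁ : ℝ), t₀ < t₁ →
      ∀ (H : ℝ → Matrix (Fin 2) (Fin 2) ℂ), ContinuousOn H (Set.Icc t₀ t₁) →
      (∀ t ∈ Set.Icc t₀ t₁, (H t).IsHermitian) →
      ∀ ε : ℝ, (∫ τ in t₀..t₁, ‖H τ‖) ≤ ε → ε ≤ 1 / 4 →
      ∀ (X : ℝ → Matrix (Fin 2) (Fin 2) ℂ), X t₀ = 1 →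
      (∀ t ∈ Set.Icc t₀ t₁, HasDerivAt X (-Complex.I • (H t * X t)) t) →
      ‖X t₁ - NormedSpace.exp (-Complex.I • (∫ τ in t₀..t₁, H τ))‖ ≤ C * ε ^ 2 := by
  refine ⟨3, by norm_num, ?_⟩
  intro t₀ t₁ hlt H Hcont Hherm ε hε hε4 X hX0 hX'
  have hle : t₀ ≤ t₁ := hlt.le
  have hε0 : 0 ≤ ε :=
    le_trans (intervalIntegral.integral_nonneg hle (fun x _ => norm_nonneg _)) hε
  -- continuity of X
  have hXc : ContinuousOn X (Set.Icc t₀ t₁) :=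
    fun t ht => (hX' t ht).continuousAt.continuousWithinAt
  have hHXc : ContinuousOn (fun τ => -Complex.I • (H τ * X τ)) (Set.Icc t₀ t₁) :=
    fun t ht => ((Hcont.mul hXc).const_smul (-Complex.I)) t ht
  have hHnormInt : IntervalIntegrable (fun τ => ‖H τ‖) volume t₀ t₁ :=
    (Hcont.norm.mono (by rw [Set.uIcc_of_le hle])).intervalIntegrable
  -- integral equation
  have key : ∀ t ∈ Set.Icc t₀ t₁, X t = 1 + ∫ τ in t₀..t, -Complex.I • (H τ * X τ) := by
    intro t ht
    have hsub : Set.uIcc t₀ t ⊆ Set.Icc t₀ t₁ := by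
      rw [Set.uIcc_of_le ht.1]
      exact Set.Icc_subset_Icc le_rfl ht.2
    have heq := intervalIntegral.integral_eq_sub_of_hasDerivAt
      (f := X) (f' := fun τ => -Complex.I • (H τ * X τ))
      (fun τ hτ => hX' τ (hsub hτ))
      ((hHXc.mono hsub).intervalIntegrable)
    rw [heq, hX0]
    abel
  -- unitarity: (X t)ᴴ * X t = 1
  have hderiv0 : ∀ t ∈ Set.Icc t₀ t₁, HasDerivAt (fun s => star (X s) * X s) 0 t := by
    intro t ht
    have h1 := (hX' t ht).star.mul (hX' t ht)
    convert h1 using 1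
    case e'_4 => rfl
    case e'_5 => rfl
    case e'_6 => rfl
    case e'_8 => rfl
    have hherm := (Hherm t ht)
    rw [Matrix.IsHermitian] at hherm
    have e1 : star (-Complex.I • (H t * X t)) = Complex.I • (star (X t) * H t) := by
      rw [star_smul, StarMul.star_mul,
        show star (H t) = H t by rw [Matrix.star_eq_conjTranspose, hherm]]
      simp
    rw [e1, smul_mul_assoc, mul_smul_comm, mul_assoc, neg_smul]
    exact (add_neg_cancel _).symm
  have hunit : ∀ t ∈ Set.Icc t₀ t₁, star (X t) * X t = 1 := by
    intro t ht
    have hc : ContinuousOn (fun s => star (X s) * X s) (Set.Icc t₀ t₁) :=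
      (hXc.star.mul hXc)
    have := constant_of_has_deriv_right_zero hc
      (fun x hx => (hderiv0 x (Set.Ico_subset_Icc_self hx)).hasDerivWithinAt) t ht
    rw [this, hX0, star_one, one_mul]
  have hXnorm : ∀ t ∈ Set.Icc t₀ t₁, ‖X t‖ = 1 := by
    intro t ht
    have h1 : ‖(X t)ᴴ * X t‖ = ‖X t‖ * ‖X t‖ := Matrix.l2_opNorm_conjTranspose_mul_self _
    rw [← Matrix.star_eq_conjTranspose, hunit t ht, norm_one] at h1
    rcases mul_self_eq_one_iff.mp h1.symm with h | h
    · exact h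
    · nlinarith [norm_nonneg (X t)]
  -- pointwise bound on the integrand norm
  have hptw : ∀ t ∈ Set.Icc t₀ t₁, ‖-Complex.I • (H t * X t)‖ ≤ ‖H t‖ := by
    intro t ht
    rw [norm_smul]
    simp only [norm_neg, Complex.norm_I, one_mul]
    calc ‖H t * X t‖ ≤ ‖H t‖ * ‖X t‖ := Matrix.l2_opNorm_mul _ _
      _ = ‖H t‖ := by rw [hXnorm t ht, mul_one]
  -- ‖X t - 1‖ ≤ ε on [t₀, t₁]
  have hdiff : ∀ t ∈ Set.Icc t₀ t₁, ‖X t - 1‖ ≤ ε := by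
    intro t ht
    have hsub : Set.uIcc t₀ t ⊆ Set.Icc t₀ t₁ := by
      rw [Set.uIcc_of_le ht.1]
      exact Set.Icc_subset_Icc le_rfl ht.2
    have h1 : X t - 1 = ∫ τ in t₀..t, -Complex.I • (H τ * X τ) := by
      rw [key t ht]; abel
    rw [h1]
    calc ‖∫ τ in t₀..t, -Complex.I • (H τ * X τ)‖
        ≤ ∫ τ in t₀..t, ‖-Complex.I • (H τ * X τ)‖ :=
          intervalIntegral.norm_integral_le_integral_norm ht.1
      _ ≤ ∫ τ in t₀..t, ‖H τ‖ := by
          apply intervalIntegral.integral_mono_on ht.1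
          · exact ((hHXc.mono hsub).norm).intervalIntegrable
          · apply hHnormInt.mono_set
            rw [Set.uIcc_of_le hle, Set.uIcc_of_le ht.1]
            exact Set.Icc_subset_Icc le_rfl ht.2
          · intro x hx
            exact hptw x ⟨hx.1, le_trans hx.2 ht.2⟩
      _ ≤ ∫ τ in t₀..t₁, ‖H τ‖ := by
          apply intervalIntegral.integral_mono_interval le_rfl ht.1 ht.2
          · filter_upwards with x using norm_nonneg _
          · exact hHnormInt
      _ ≤ ε := hε
  -- set up the decomposition
  set A := -Complex.I • (∫ τ in t₀..t₁, H τ) with hA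
  have hHint : IntervalIntegrable H volume t₀ t₁ :=
    (Hcont.mono (by rw [Set.uIcc_of_le hle])).intervalIntegrable
  have hAnorm : ‖A‖ ≤ ε := by
    rw [hA, norm_smul]
    simp only [norm_neg, Complex.norm_I, one_mul]
    calc ‖∫ τ in t₀..t₁, H τ‖ ≤ ∫ τ in t₀..t₁, ‖H τ‖ :=
          intervalIntegral.norm_integral_le_integral_norm hle
      _ ≤ ε := hε
  have hIeq : A = ∫ τ in t₀..t₁, -Complex.I • H τ :=
    (intervalIntegral.integral_smul _ _).symm
  have hHXint : IntervalIntegrable (fun τ => -Complex.I • (H τ * X τ)) volume t₀ t₁ :=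
    (hHXc.mono (by rw [Set.uIcc_of_le hle])).intervalIntegrable
  have hHint' : IntervalIntegrable (fun τ => -Complex.I • H τ) volume t₀ t₁ :=
    ((show ContinuousOn (fun τ => -Complex.I • H τ) (Set.Icc t₀ t₁) from
      fun t ht => (Hcont.const_smul (-Complex.I)) t ht).mono (by rw [Set.uIcc_of_le hle])).intervalIntegrable
  have hsplit : X t₁ - NormedSpace.exp A
      = (∫ τ in t₀..t₁, -Complex.I • (H τ * (X τ - 1)))
        - (NormedSpace.exp A - 1 - A) := by
    have h1 : X t₁ = 1 + ∫ τ in t₀..t₁, -Complex.I • (H τ * X τ) :=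
      key t₁ ⟨hle, le_rfl⟩
    have h2 : ∫ τ in t₀..t₁, -Complex.I • (H τ * (X τ - 1))
        = (∫ τ in t₀..t₁, -Complex.I • (H τ * X τ)) - ∫ τ in t₀..t₁, -Complex.I • H τ := by
      rw [← intervalIntegral.integral_sub hHXint hHint']
      congr 1
      funext τ
      rw [mul_sub, smul_sub, mul_one]
    rw [h1, h2, ← hIeq]
    abel
  -- final estimate
  have hterm1 : ‖∫ τ in t₀..t₁, -Complex.I • (H τ * (X τ - 1))‖ ≤ ε ^ 2 := by
    have hcont1 : ContinuousOn (fun τ => -Complex.I • (H τ * (X τ - 1))) (Set.Icc t₀ t₁) :=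
      fun t ht => ((Hcont.mul (hXc.sub continuousOn_const)).const_smul (-Complex.I)) t ht
    calc ‖∫ τ in t₀..t₁, -Complex.I • (H τ * (X τ - 1))‖
        ≤ ∫ τ in t₀..t₁, ‖-Complex.I • (H τ * (X τ - 1))‖ :=
          intervalIntegral.norm_integral_le_integral_norm hle
      _ ≤ ∫ τ in t₀..t₁, ‖H τ‖ * ε := by
          apply intervalIntegral.integral_mono_on hle
          · exact ((hcont1.mono (by rw [Set.uIcc_of_le hle])).norm).intervalIntegrable
          · exact hHnormInt.mul_const ε
          · intro x hx
            rw [norm_smul]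
            simp only [norm_neg, Complex.norm_I, one_mul]
            calc ‖H x * (X x - 1)‖ ≤ ‖H x‖ * ‖X x - 1‖ := Matrix.l2_opNorm_mul _ _
              _ ≤ ‖H x‖ * ε := by
                  exact mul_le_mul_of_nonneg_left (hdiff x hx) (norm_nonneg _)
      _ = (∫ τ in t₀..t₁, ‖H τ‖) * ε := by
          rw [intervalIntegral.integral_mul_const]
      _ ≤ ε * ε := mul_le_mul_of_nonneg_right hε hε0
      _ = ε ^ 2 := (sq ε).symm
  have hterm2 : ‖NormedSpace.exp A - 1 - A‖ ≤ 2 * ε ^ 2 :=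
    magnus_aux_exp_remainder A ε hε0 hAnorm hε4
  calc ‖X t₁ - NormedSpace.exp A‖
      ≤ ‖∫ τ in t₀..t₁, -Complex.I • (H τ * (X τ - 1))‖ + ‖NormedSpace.exp A - 1 - A‖ := by
        rw [hsplit]; exact norm_sub_le _ _
    _ ≤ ε ^ 2 + 2 * ε ^ 2 := add_le_add hterm1 hterm2
    _ = 3 * ε ^ 2 := by ring
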